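/- For every integer i ≥ 2, the Vega graph Υ_i^{00} is triangle-free and has chromatic number 4. -/

import Mathlib

open Finset

/-- Base adjacency relation for the Vega graph: vertices are the vertices of the
Andrasfai graph (inl) together with x,y,a,b,c,u,v,w coded as inr 0,...,inr 7. -/
def vegaBase (i : ℕ) : (Fin (3 * i - 1) ⊕ Fin 8) → (Fin (3 * i - 1) ⊕ Fin 8) → Prop
  | Sum.inl j, Sum.inl l =>
      (l.val + (3 * i - 1) - j.val) % (3 * i - 1) ∈ Finset.Icc i (2 * i - 1)
  | Sum.inr h, Sum.inl j =>
      ((h = 2 ∨ h = 5) ∧ j.val < i) ∨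
      ((h = 3 ∨ h = 6) ∧ i ≤ j.val ∧ j.val < 2 * i) ∨
      ((h = 4 ∨ h = 7) ∧ 2 * i ≤ j.val)
  | Sum.inl _, Sum.inr _ => False
  | Sum.inr h, Sum.inr h' =>
      (h = 0 ∧ h' = 1) ∨ (h = 2 ∧ h' = 6) ∨ (h = 6 ∧ h' = 4) ∨ (h = 4 ∧ h' = 5) ∨
      (h = 5 ∧ h' = 3) ∨ (h = 3 ∧ h' = 7) ∨ (h = 7 ∧ h' = 2) ∨
      (h = 0 ∧ h' = 2) ∨ (h = 0 ∧ h' = 3) ∨ (h = 0 ∧ h' = 4) ∨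
      (h = 1 ∧ h' = 5) ∨ (h = 1 ∧ h' = 6) ∨ (h = 1 ∧ h' = 7)

/-- The Vega graph Υ_i^{00}. -/
def vega (i : ℕ) : SimpleGraph (Fin (3 * i - 1) ⊕ Fin 8) where
  Adj z z' := z ≠ z' ∧ (vegaBase i z z' ∨ vegaBase i z' z)
  symm := ⟨fun _ _ h => ⟨h.1.symm, h.2.symm⟩⟩
  loopless := ⟨fun _ h => h.1 rfl⟩

/-- The weight ω_{00}. -/
def vegaW00 (i : ℕ) : (Fin (3 * i - 1) ⊕ Fin 8) → ℤ
  | Sum.inl j => if j.val = 0 ∨ j.val = 2 * i - 1 then 1 else 3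
  | Sum.inr h => if h = 0 ∨ h = 1 then 1
      else if h = 4 ∨ h = 7 then 3 * (i : ℤ) - 3 else 3 * (i : ℤ) - 2

/-- The correction function f (1 on u,v,w,y; -1 on x). -/
def vegaF (i : ℕ) : (Fin (3 * i - 1) ⊕ Fin 8) → ℤ
  | Sum.inl _ => 0
  | Sum.inr h => if h = 1 ∨ h = 5 ∨ h = 6 ∨ h = 7 then 1 else if h = 0 then -1 else 0

/-- The correction function g (1 on b, v, v_{i-1}, v_{2i-1}; -1 on v_0). -/
def vegaG (i : ℕ) : (Fin (3 * i - 1) ⊕ Fin 8) → ℤ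
  | Sum.inl j => if j.val = i - 1 ∨ j.val = 2 * i - 1 then 1
      else if j.val = 0 then -1 else 0
  | Sum.inr h => if h = 3 ∨ h = 6 then 1 else 0

/-- The weight ω_{μν} = ω_{00} - μ f - ν g. -/
def vegaW (i μ ν : ℕ) (z : Fin (3 * i - 1) ⊕ Fin 8) : ℤ :=
  vegaW00 i z - μ * vegaF i z - ν * vegaG i z

/-- The blow-up of a graph `F` with class sizes given by `w`. -/
def SimpleGraph.blowup {α : Type*} (F : SimpleGraph α) (w : α → ℕ) :
    SimpleGraph (Σ a, Fin (w a)) where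
  Adj x y := F.Adj x.1 y.1
  symm := ⟨fun _ _ h => F.symm.symm _ _ h⟩
  loopless := ⟨fun x h => F.loopless.irrefl x.1 h⟩


section VegaAux

open Sum

lemma vega_mod_helper (N j l : ℕ) (hj : j < N) (hl : l < N) :
    (l + N - j) % N = if j ≤ l then l - j else l + N - j := by
  split
  · have h1 : l + N - j = (l - j) + N := by omega
    rw [h1, Nat.add_mod_right, Nat.mod_eq_of_lt (by omega)]
  · exact Nat.mod_eq_of_lt (by omega)

lemma vega_adj_ll {i : ℕ} (hi : 2 ≤ i) {j l : Fin (3*i-1)}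
    (h : (vega i).Adj (inl j) (inl l)) :
    (i ≤ l.val - j.val ∧ l.val - j.val ≤ 2*i-1) ∨
    (i ≤ j.val - l.val ∧ j.val - l.val ≤ 2*i-1) := by
  have hj := j.isLt; have hl := l.isLt
  obtain ⟨-, h | h⟩ := h
  · simp only [vegaBase, Finset.mem_Icc] at h
    rw [vega_mod_helper _ _ _ hj hl] at h
    split_ifs at h <;> omega
  · simp only [vegaBase, Finset.mem_Icc] at h
    rw [vega_mod_helper _ _ _ hl hj] at h
    split_ifs at h <;> omega

lemma vega_adj_ll' {i : ℕ} (hi : 2 ≤ i) {j l : Fin (3*i-1)}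
    (h1 : i ≤ l.val - j.val) (h2 : l.val - j.val ≤ 2*i-1) :
    (vega i).Adj (inl j) (inl l) := by
  have hj := j.isLt; have hl := l.isLt
  refine ⟨fun e => ?_, Or.inl ?_⟩
  · have : j.val = l.val := congrArg (fun z => match z with | inl a => a.val | inr _ => 0) e
    omega
  · show (l.val + (3*i-1) - j.val) % (3*i-1) ∈ Finset.Icc i (2*i-1)
    rw [Finset.mem_Icc, vega_mod_helper _ _ _ hj hl, if_pos (by omega)]
    omega

lemma vega_adj_rl {i : ℕ} {h : Fin 8} {j : Fin (3*i-1)}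
    (hadj : (vega i).Adj (inr h) (inl j)) :
    ((h = 2 ∨ h = 5) ∧ j.val < i) ∨
    ((h = 3 ∨ h = 6) ∧ i ≤ j.val ∧ j.val < 2 * i) ∨
    ((h = 4 ∨ h = 7) ∧ 2 * i ≤ j.val) := by
  obtain ⟨-, hb | hb⟩ := hadj
  · exact hb
  · exact hb.elim

lemma vega_adj_rl' {i : ℕ} {h : Fin 8} {j : Fin (3*i-1)}
    (hb : ((h = 2 ∨ h = 5) ∧ j.val < i) ∨
      ((h = 3 ∨ h = 6) ∧ i ≤ j.val ∧ j.val < 2 * i) ∨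
      ((h = 4 ∨ h = 7) ∧ 2 * i ≤ j.val)) :
    (vega i).Adj (inr h) (inl j) :=
  ⟨Sum.inr_ne_inl, Or.inl hb⟩

def vegaQ (h h' : Fin 8) : Prop :=
  (h = 0 ∧ h' = 1) ∨ (h = 2 ∧ h' = 6) ∨ (h = 6 ∧ h' = 4) ∨ (h = 4 ∧ h' = 5) ∨
  (h = 5 ∧ h' = 3) ∨ (h = 3 ∧ h' = 7) ∨ (h = 7 ∧ h' = 2) ∨
  (h = 0 ∧ h' = 2) ∨ (h = 0 ∧ h' = 3) ∨ (h = 0 ∧ h' = 4) ∨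
  (h = 1 ∧ h' = 5) ∨ (h = 1 ∧ h' = 6) ∨ (h = 1 ∧ h' = 7)

instance vegaQ.dec (h h' : Fin 8) : Decidable (vegaQ h h') := by
  unfold vegaQ; infer_instance

lemma vega_adj_rr {i : ℕ} {h h' : Fin 8}
    (hadj : (vega i).Adj (inr h) (inr h')) : vegaQ h h' ∨ vegaQ h' h := by
  obtain ⟨-, hb | hb⟩ := hadj
  · exact Or.inl hb
  · exact Or.inr hb

lemma vega_adj_rr' {i : ℕ} {h h' : Fin 8} (hne : h ≠ h') (hq : vegaQ h h') :
    (vega i).Adj (inr h) (inr h') :=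
  ⟨fun e => hne (Sum.inr.inj e), Or.inl hq⟩

lemma vega_no_rrr : ∀ h1 h2 h3 : Fin 8,
    ¬((vegaQ h1 h2 ∨ vegaQ h2 h1) ∧ (vegaQ h1 h3 ∨ vegaQ h3 h1) ∧
      (vegaQ h2 h3 ∨ vegaQ h3 h2)) := by decide

lemma vegaQ_val : ∀ h h' : Fin 8, vegaQ h h' →
    (h.val = 0 ∧ h'.val = 1) ∨ (h.val = 2 ∧ h'.val = 6) ∨ (h.val = 6 ∧ h'.val = 4) ∨
    (h.val = 4 ∧ h'.val = 5) ∨ (h.val = 5 ∧ h'.val = 3) ∨ (h.val = 3 ∧ h'.val = 7) ∨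
    (h.val = 7 ∧ h'.val = 2) ∨ (h.val = 0 ∧ h'.val = 2) ∨ (h.val = 0 ∧ h'.val = 3) ∨
    (h.val = 0 ∧ h'.val = 4) ∨ (h.val = 1 ∧ h'.val = 5) ∨ (h.val = 1 ∧ h'.val = 6) ∨
    (h.val = 1 ∧ h'.val = 7) := by decide

lemma vega_class_val : ∀ h : Fin 8,
    ((h = 2 ∨ h = 5) → h.val = 2 ∨ h.val = 5) ∧
    ((h = 3 ∨ h = 6) → h.val = 3 ∨ h.val = 6) ∧
    ((h = 4 ∨ h = 7) → h.val = 4 ∨ h.val = 7) := by decide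

/-- class constraints in `Nat.val` form -/
lemma vega_adj_rl_val {i : ℕ} {h : Fin 8} {j : Fin (3*i-1)}
    (hadj : (vega i).Adj (inr h) (inl j)) :
    ((h.val = 2 ∨ h.val = 5) ∧ j.val < i) ∨
    ((h.val = 3 ∨ h.val = 6) ∧ i ≤ j.val ∧ j.val < 2 * i) ∨
    ((h.val = 4 ∨ h.val = 7) ∧ 2 * i ≤ j.val) := by
  rcases vega_adj_rl hadj with ⟨hh, hc⟩ | ⟨hh, hc⟩ | ⟨hh, hc⟩
  · exact Or.inl ⟨(vega_class_val h).1 hh, hc⟩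
  · exact Or.inr (Or.inl ⟨(vega_class_val h).2.1 hh, hc⟩)
  · exact Or.inr (Or.inr ⟨(vega_class_val h).2.2 hh, hc⟩)

def vegaColR : Fin 8 → Fin 4 := ![0, 1, 3, 3, 3, 2, 0, 0]

lemma vegaColR_rr : ∀ h h' : Fin 8, (vegaQ h h' ∨ vegaQ h' h) →
    vegaColR h ≠ vegaColR h' := by decide

lemma vegaColR_class : ∀ h : Fin 8,
    ((h = 2 ∨ h = 5) → vegaColR h ≠ 0) ∧
    ((h = 3 ∨ h = 6) → vegaColR h ≠ 1) ∧
    ((h = 4 ∨ h = 7) → vegaColR h ≠ 2) := by decide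

set_option maxHeartbeats 4000000 in
lemma vega_groetzsch (x a b c u v w p0 p1 p2 p4 : ℕ)
    (hx : x < 3) (ha : a < 3) (hb : b < 3) (hc : c < 3) (hu : u < 3) (hv : v < 3)
    (hw : w < 3) (h0 : p0 < 3) (h1 : p1 < 3) (h2 : p2 < 3) (h4 : p4 < 3)
    (e1 : x ≠ a) (e2 : x ≠ b) (e3 : x ≠ c) (e4 : a ≠ v) (e5 : v ≠ c) (e6 : c ≠ u)
    (e7 : u ≠ b) (e8 : b ≠ w) (e9 : w ≠ a) (e10 : a ≠ p0) (e11 : a ≠ p1)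
    (e12 : u ≠ p0) (e13 : u ≠ p1) (e14 : b ≠ p2) (e15 : v ≠ p2) (e16 : c ≠ p4)
    (e17 : w ≠ p4) (e18 : p0 ≠ p2) (e19 : p1 ≠ p4) (e20 : p2 ≠ p4) : False := by
  omega

end VegaAux

/-- For every i ≥ 2, the Vega graph Υ_i^{00} is triangle-free and has chromatic
number 4. -/
theorem stmt_17 (i : ℕ) (hi : 2 ≤ i) :
    (vega i).CliqueFree 3 ∧ (vega i).chromaticNumber = 4 := by
  open Sum in
  constructor
  · -- triangle-free
    intro s hs
    rw [SimpleGraph.is3Clique_iff] at hs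
    obtain ⟨z1, z2, z3, h12, h13, h23, -⟩ := hs
    rcases z1 with j1 | h1 <;> rcases z2 with j2 | h2 <;> rcases z3 with j3 | h3
    · have d12 := vega_adj_ll hi h12
      have d13 := vega_adj_ll hi h13
      have d23 := vega_adj_ll hi h23
      omega
    · have d := vega_adj_ll hi h12
      have b1 := vega_adj_rl_val h13.symm
      have b2 := vega_adj_rl_val h23.symm
      omega
    · have d := vega_adj_ll hi h13
      have b1 := vega_adj_rl_val h12.symm
      have b2 := vega_adj_rl_val h23
      omega
    · have q := vega_adj_rr h23
      have b1 := vega_adj_rl_val h12.symm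
      have b2 := vega_adj_rl_val h13.symm
      rcases q with q | q <;> have := vegaQ_val _ _ q <;> omega
    · have d := vega_adj_ll hi h23
      have b1 := vega_adj_rl_val h12
      have b2 := vega_adj_rl_val h13
      omega
    · have q := vega_adj_rr h13
      have b1 := vega_adj_rl_val h12
      have b2 := vega_adj_rl_val h23.symm
      rcases q with q | q <;> have := vegaQ_val _ _ q <;> omega
    · have q := vega_adj_rr h12
      have b1 := vega_adj_rl_val h13
      have b2 := vega_adj_rl_val h23
      rcases q with q | q <;> have := vegaQ_val _ _ q <;> omega
    · exact vega_no_rrr h1 h2 h3 ⟨vega_adj_rr h12, vega_adj_rr h13, vega_adj_rr h23⟩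
  · -- chromatic number
    have hcol : (vega i).Colorable 4 := by
      refine ⟨SimpleGraph.Coloring.mk
        (Sum.elim (fun j : Fin (3*i-1) =>
          if j.val < i then (0 : Fin 4) else if j.val < 2*i then 1 else 2) vegaColR) ?_⟩
      intro z z' hadj heq
      rcases z with j | h <;> rcases z' with j' | h'
      · have d := vega_adj_ll hi hadj
        simp only [Sum.elim_inl] at heq
        split_ifs at heq <;> first
          | omega
          | exact absurd heq (by decide)
      · simp only [Sum.elim_inl, Sum.elim_inr] at heq
        rcases vega_adj_rl hadj.symm with ⟨hh, hj⟩ | ⟨hh, hj⟩ | ⟨hh, hj⟩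
        · rw [if_pos hj] at heq
          exact (vegaColR_class h').1 hh heq.symm
        · rw [if_neg (by omega), if_pos hj.2] at heq
          exact (vegaColR_class h').2.1 hh heq.symm
        · rw [if_neg (by omega), if_neg (by omega)] at heq
          exact (vegaColR_class h').2.2 hh heq.symm
      · simp only [Sum.elim_inl, Sum.elim_inr] at heq
        rcases vega_adj_rl hadj with ⟨hh, hj⟩ | ⟨hh, hj⟩ | ⟨hh, hj⟩
        · rw [if_pos hj] at heq
          exact (vegaColR_class h).1 hh heq
        · rw [if_neg (by omega), if_pos hj.2] at heq
          exact (vegaColR_class h).2.1 hh heq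
        · rw [if_neg (by omega), if_neg (by omega)] at heq
          exact (vegaColR_class h).2.2 hh heq
      · exact vegaColR_rr h h' (vega_adj_rr hadj) heq
    have hn3 : ¬ (vega i).Colorable 3 := by
      rintro ⟨C⟩
      have h0lt : (0 : ℕ) < 3*i-1 := by omega
      have h1lt : i - 1 < 3*i-1 := by omega
      have h2lt : i < 3*i-1 := by omega
      have h4lt : 2*i < 3*i-1 := by omega
      set P0 : Fin (3*i-1) ⊕ Fin 8 := inl ⟨0, h0lt⟩ with hP0
      set P1 : Fin (3*i-1) ⊕ Fin 8 := inl ⟨i-1, h1lt⟩ with hP1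
      set P2 : Fin (3*i-1) ⊕ Fin 8 := inl ⟨i, h2lt⟩ with hP2
      set P4 : Fin (3*i-1) ⊕ Fin 8 := inl ⟨2*i, h4lt⟩ with hP4
      have ne_of_adj : ∀ {z z' : Fin (3*i-1) ⊕ Fin 8}, (vega i).Adj z z' →
          (C z).val ≠ (C z').val := fun hadj e => C.valid hadj (Fin.val_injective e)
      exact vega_groetzsch (C (inr 0)).val (C (inr 2)).val (C (inr 3)).val
        (C (inr 4)).val (C (inr 5)).val (C (inr 6)).val (C (inr 7)).val
        (C P0).val (C P1).val (C P2).val (C P4).val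
        (C _).isLt (C _).isLt (C _).isLt (C _).isLt (C _).isLt (C _).isLt (C _).isLt
        (C _).isLt (C _).isLt (C _).isLt (C _).isLt
        (ne_of_adj (vega_adj_rr' (by decide) (by decide)))
        (ne_of_adj (vega_adj_rr' (by decide) (by decide)))
        (ne_of_adj (vega_adj_rr' (by decide) (by decide)))
        (ne_of_adj (vega_adj_rr' (by decide) (by decide)))
        (ne_of_adj (vega_adj_rr' (by decide) (by decide)))
        (ne_of_adj (vega_adj_rr' (by decide) (by decide)))
        (ne_of_adj (vega_adj_rr' (by decide) (by decide)))
        (ne_of_adj (vega_adj_rr' (by decide) (by decide)))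
        (ne_of_adj (vega_adj_rr' (by decide) (by decide)))
        (ne_of_adj (vega_adj_rl' (Or.inl ⟨Or.inl rfl, show (0:ℕ) < i by omega⟩)))
        (ne_of_adj (vega_adj_rl' (Or.inl ⟨Or.inl rfl, show i - 1 < i by omega⟩)))
        (ne_of_adj (vega_adj_rl' (Or.inl ⟨Or.inr rfl, show (0:ℕ) < i by omega⟩)))
        (ne_of_adj (vega_adj_rl' (Or.inl ⟨Or.inr rfl, show i - 1 < i by omega⟩)))
        (ne_of_adj (vega_adj_rl' (Or.inr (Or.inl ⟨Or.inl rfl, show i ≤ i ∧ i < 2*i by omega⟩))))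
        (ne_of_adj (vega_adj_rl' (Or.inr (Or.inl ⟨Or.inr rfl, show i ≤ i ∧ i < 2*i by omega⟩))))
        (ne_of_adj (vega_adj_rl' (Or.inr (Or.inr ⟨Or.inl rfl, show 2*i ≤ 2*i by omega⟩))))
        (ne_of_adj (vega_adj_rl' (Or.inr (Or.inr ⟨Or.inr rfl, show 2*i ≤ 2*i by omega⟩))))
        (ne_of_adj (vega_adj_ll' hi (show i ≤ i - 0 by omega) (show i - 0 ≤ 2*i-1 by omega)))
        (ne_of_adj (vega_adj_ll' hi (show i ≤ 2*i - (i-1) by omega)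
          (show 2*i - (i-1) ≤ 2*i-1 by omega)))
        (ne_of_adj (vega_adj_ll' hi (show i ≤ 2*i - i by omega) (show 2*i - i ≤ 2*i-1 by omega)))
    have hle : (vega i).chromaticNumber ≤ 4 := by
      have := hcol.chromaticNumber_le
      exact_mod_cast this
    have hge : (4 : ℕ∞) ≤ (vega i).chromaticNumber := by
      have h3 : ¬ ((vega i).chromaticNumber ≤ 3) := fun h =>
        hn3 (SimpleGraph.chromaticNumber_le_iff_colorable.mp (by exact_mod_cast h))
      have hlt : (3 : ℕ∞) < (vega i).chromaticNumber := lt_of_not_ge h3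
      have : (3 : ℕ∞) + 1 ≤ (vega i).chromaticNumber :=
        (ENat.add_one_le_iff (by norm_num)).mpr hlt
      convert this using 1
      norm_num
    exact le_antisymm hle hge
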